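/- For every integer k ≥ 0, as formal power series in q, Σ_{n≥0} g_k(n) q^n = Σ_{i≥0} q^{i²+ik+i} / ((q;q)_{i+k} (q;q)_i), where the right-hand side converges coefficientwise (the term for index i has lowest degree i²+ik+i). -/

import Mathlib

/-- `l` is a partition of `n`: a nonincreasing list of positive integers summing to `n`. -/
noncomputable def IsPartitionOf (n : ℕ) (l : List ℕ) : Prop :=
  l.Pairwise (· ≥ ·) ∧ (∀ x ∈ l, 0 < x) ∧ l.sum = n

/-- The partition `l` has a `k`-fixed point: `λ_i = i + k` for some (1-indexed) index `i`. -/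
noncomputable def HasKFixedPoint (k : ℤ) (l : List ℕ) : Prop :=
  ∃ i : Fin l.length, (l.get i : ℤ) = (i.val : ℤ) + 1 + k

/-- `f_k(n)`: the number of partitions of `n` with a `k`-fixed point. -/
noncomputable def fk (k : ℤ) (n : ℕ) : ℕ :=
  {l : List ℕ | IsPartitionOf n l ∧ HasKFixedPoint k l}.ncard

/-- `g_k(n)`: the number of partitions of `n` without a `k`-fixed point. -/
noncomputable def gk (k : ℤ) (n : ℕ) : ℕ :=
  {l : List ℕ | IsPartitionOf n l ∧ ¬ HasKFixedPoint k l}.ncard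

/-- `mex_j(l)`: the smallest integer greater than `j` that is not a part of `l`. -/
noncomputable def mexJ (j : ℕ) (l : List ℕ) : ℕ := sInf {m : ℕ | j < m ∧ m ∉ l}

/-- Dyson's crank of a partition. -/
noncomputable def crank (l : List ℕ) : ℤ :=
  if l.count 1 = 0 then (l.headI : ℤ)
  else ((l.filter (fun x => l.count 1 < x)).length : ℤ) - (l.count 1 : ℤ)

/-- `M(m,n)`: the number of partitions of `n` with crank `m`. -/
noncomputable def M (m : ℤ) (n : ℕ) : ℕ :=
  {l : List ℕ | IsPartitionOf n l ∧ crank l = m}.ncard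

/-- `p(n)`: the number of partitions of `n`. -/
noncomputable def partitionCount (n : ℕ) : ℕ := {l : List ℕ | IsPartitionOf n l}.ncard

/-- `p(n,j)`: the number of partitions of `n` into at most `j` parts. -/
noncomputable def pAtMost (n : ℕ) (j : ℤ) : ℕ :=
  {l : List ℕ | IsPartitionOf n l ∧ (l.length : ℤ) ≤ j}.ncard

/-- `g'_{-k}(n)`: partitions of `n` with at least `k` parts and no `-k`-fixed point. -/
noncomputable def gneg (k : ℕ) (n : ℕ) : ℕ :=
  {l : List ℕ | IsPartitionOf n l ∧ k ≤ l.length ∧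
    ∀ i : Fin l.length, (l.get i : ℤ) ≠ (i.val : ℤ) + 1 - k}.ncard

/-- `(q;q)_i = ∏_{m=1}^{i} (1 - q^m)` as a formal power series over `ℤ`. -/
noncomputable def qPoch (i : ℕ) : PowerSeries ℤ :=
  ∏ m ∈ Finset.range i, (1 - PowerSeries.X ^ (m + 1))

open Finset List


lemma length_le_sum (l : List ℕ) (h : ∀ x ∈ l, 0 < x) : l.length ≤ l.sum := by
  induction l with
  | nil => simp
  | cons a t ih =>
    simp only [List.length_cons, List.sum_cons]
    have := h a (by simp)
    have := ih (fun x hx => h x (by simp [hx]))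
    omega

lemma partFinite (n : ℕ) : {l : List ℕ | IsPartitionOf n l}.Finite := by
  apply Set.Finite.of_finite_image (f := fun l : List ℕ => l.map (fun x => (⟨min x n, by omega⟩ : Fin (n+1))))
  · apply (List.finite_length_le (Fin (n+1)) n).subset
    rintro _ ⟨l, hl, rfl⟩
    simp only [Set.mem_setOf_eq, List.length_map]
    calc l.length ≤ l.sum := length_le_sum l hl.2.1
    _ = n := hl.2.2
  · intro l₁ h₁ l₂ h₂ heq
    have key : ∀ l : List ℕ, IsPartitionOf n l →
        (l.map (fun x => (⟨min x n, by omega⟩ : Fin (n+1)))).map Fin.val = l := by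
      intro l hl
      rw [List.map_map]
      have h' : ∀ x ∈ l, (Fin.val ∘ fun x => (⟨min x n, by omega⟩ : Fin (n+1))) x = id x := by
        intro x hx
        have hx' : x ≤ n := hl.2.2 ▸ List.le_sum_of_mem hx
        simp [Function.comp, Nat.min_eq_left hx']
      rw [List.map_congr_left h', List.map_id]
    have h2 := congrArg (List.map Fin.val) heq
    simp only at h2
    rwa [key l₁ h₁, key l₂ h₂] at h2

lemma ncard_biUnion {ι α : Type*} (s : Finset ι) (f : ι → Set α)
    (hfin : ∀ i ∈ s, (f i).Finite)
    (hdisj : ∀ i ∈ s, ∀ j ∈ s, i ≠ j → Disjoint (f i) (f j)) :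
    (⋃ i ∈ s, f i).ncard = ∑ i ∈ s, (f i).ncard := by
  classical
  induction s using Finset.induction with
  | empty => simp
  | @insert a s hx ih =>
    rw [Finset.set_biUnion_insert, Finset.sum_insert hx]
    rw [Set.ncard_union_eq ?_ ?_ ?_]
    · rw [ih (fun i hi => hfin i (by simp [hi])) (fun i hi j hj => hdisj i (by simp [hi]) j (by simp [hj]))]
    · exact Set.disjoint_iUnion₂_right.mpr fun i hi =>
        hdisj a (Finset.mem_insert_self a s) i (Finset.mem_insert_of_mem (by simpa using hi))
          (by rintro rfl; exact hx (by simpa using hi))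
    · exact hfin a (by simp)
    · exact Set.Finite.biUnion (Finset.finite_toSet s) (fun i hi => hfin i (Finset.mem_insert_of_mem (by simpa using hi)))

lemma ncard_prod' {α β : Type*} (s : Set α) (t : Set β) (hs : s.Finite) (ht : t.Finite) :
    (s ×ˢ t).ncard = s.ncard * t.ncard := by
  rw [Set.ncard_eq_toFinset_card _ (hs.prod ht), ← Set.Finite.toFinset_prod,
    Finset.card_product, Set.ncard_eq_toFinset_card _ hs, Set.ncard_eq_toFinset_card _ ht]


def pad (c m : ℕ) (α : List ℕ) : List ℕ := α.map (· + c) ++ List.replicate (m - α.length) c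
def strip (c : ℕ) (l : List ℕ) : List ℕ := (l.map (· - c)).filter (· ≠ 0)

lemma sorted_map_mono {f : ℕ → ℕ} (hf : ∀ a b : ℕ, a ≥ b → f a ≥ f b) {l : List ℕ}
    (h : l.Pairwise (· ≥ ·)) : (l.map f).Pairwise (· ≥ ·) := by
  rw [List.pairwise_map]
  exact h.imp (fun hab => hf _ _ hab)

lemma strip_sorted {c : ℕ} {l : List ℕ} (h : l.Pairwise (· ≥ ·)) : (strip c l).Pairwise (· ≥ ·) :=
  (sorted_map_mono (fun a b hab => Nat.sub_le_sub_right hab c) h).filter _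

lemma strip_pos {c : ℕ} {l : List ℕ} : ∀ x ∈ strip c l, 0 < x := by
  intro x hx
  have := List.of_mem_filter hx
  exact Nat.pos_of_ne_zero (by simpa using this)

lemma strip_length_le (c : ℕ) (l : List ℕ) : (strip c l).length ≤ l.length :=
  le_trans (List.length_filter_le _ _) (by simp)

lemma mul_length_le_sum {c : ℕ} {l : List ℕ} (h : ∀ x ∈ l, c ≤ x) :
    c * l.length ≤ l.sum := by
  induction l with
  | nil => simp
  | cons a t ih =>
    have h1 := h a (by simp)
    have h2 := ih (fun x hx => h x (by simp [hx]))
    simp only [List.length_cons, List.sum_cons]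
    have : c * (t.length + 1) = c * t.length + c := by ring
    omega

lemma sum_map_sub {c : ℕ} {l : List ℕ} (h : ∀ x ∈ l, c ≤ x) :
    (l.map (· - c)).sum = l.sum - c * l.length := by
  induction l with
  | nil => simp
  | cons a t ih =>
    have h1 := h a (by simp)
    have h2 : ∀ x ∈ t, c ≤ x := fun x hx => h x (by simp [hx])
    have h3 : c * t.length ≤ t.sum := mul_length_le_sum h2
    simp only [List.map_cons, List.sum_cons, List.length_cons, ih h2]
    have : c * (t.length + 1) = c * t.length + c := by ring
    omega

lemma sum_map_add (c : ℕ) (l : List ℕ) : (l.map (· + c)).sum = l.sum + c * l.length := by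
  induction l with
  | nil => simp
  | cons a t ih => simp only [List.map_cons, List.sum_cons, List.length_cons, ih]; ring

lemma sum_filter_ne_zero (l : List ℕ) : (l.filter (· ≠ 0)).sum = l.sum := by
  induction l with
  | nil => simp
  | cons a t ih =>
    rcases eq_or_ne a 0 with rfl | ha
    · simpa using ih
    · rw [List.filter_cons_of_pos (by simpa using ha), List.sum_cons, ih, List.sum_cons]

lemma strip_sum {c : ℕ} {l : List ℕ} (h : ∀ x ∈ l, c ≤ x) :
    (strip c l).sum = l.sum - c * l.length := by
  rw [strip, sum_filter_ne_zero, sum_map_sub h]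

lemma strip_replicate (c m : ℕ) : strip c (List.replicate m c) = [] := by
  simp [strip]

lemma pad_strip {c : ℕ} (hc : 0 < c) {l : List ℕ} (h : l.Pairwise (· ≥ ·))
    (hb : ∀ x ∈ l, c ≤ x) : pad c l.length (strip c l) = l := by
  induction l with
  | nil => simp [pad, strip]
  | cons a t ih =>
    have ha := hb a (by simp)
    have hbt : ∀ x ∈ t, c ≤ x := fun x hx => hb x (by simp [hx])
    rcases eq_or_lt_of_le ha with heq | hlt
    · -- a = c, so the whole list is replicate c
      have hall : ∀ x ∈ a :: t, x = c := by
        intro x hx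
        rcases List.mem_cons.mp hx with rfl | hx'
        · omega
        · have := (List.pairwise_cons.mp h).1 x hx'
          have := hb x hx
          omega
      have hrep : a :: t = List.replicate (a :: t).length c :=
        List.eq_replicate_iff.mpr ⟨rfl, hall⟩
      rw [hrep, strip_replicate]
      simp [pad]
    · -- c < a
      have hane : a - c ≠ 0 := by omega
      have hstep : strip c (a :: t) = (a - c) :: strip c t := by
        rw [strip, List.map_cons, List.filter_cons_of_pos (by simpa using hane)]
        rfl
      rw [hstep, pad, List.map_cons]
      have hlen : (strip c t).length ≤ t.length := strip_length_le c t
      have : (a :: t).length - ((a - c) :: strip c t).length = t.length - (strip c t).length := by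
        simp only [List.length_cons]; omega
      rw [this]
      have hsub : a - c + c = a := by omega
      simp only [List.cons_append, hsub]
      congr 1
      exact ih (List.pairwise_cons.mp h).2 hbt

lemma strip_pad {c m : ℕ} {α : List ℕ} (hpos : ∀ x ∈ α, 0 < x) : strip c (pad c m α) = α := by
  rw [strip, pad, List.map_append, List.map_map, List.map_replicate, Nat.sub_self,
    List.filter_append]
  have h1 : α.map ((· - c) ∘ (· + c)) = α := by
    have : ∀ x ∈ α, ((· - c) ∘ (· + c)) x = id x := fun x _ => by simp
    rw [List.map_congr_left this, List.map_id]
  rw [h1]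
  rw [List.filter_eq_self.mpr (by intro x hx; simpa using Nat.pos_iff_ne_zero.mp (hpos x hx)),
    List.filter_replicate]
  simp

lemma pad_sorted {c m : ℕ} {α : List ℕ} (h : α.Pairwise (· ≥ ·)) :
    (pad c m α).Pairwise (· ≥ ·) := by
  rw [pad, List.pairwise_append]
  refine ⟨sorted_map_mono (fun a b hab => by omega) h, List.pairwise_replicate.mpr (by simp), ?_⟩
  intro x hx y hy
  rw [List.eq_of_mem_replicate hy]
  rcases List.mem_map.mp hx with ⟨z, _, rfl⟩
  omega

lemma pad_length {c m : ℕ} {α : List ℕ} (h : α.length ≤ m) : (pad c m α).length = m := by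
  simp [pad]; omega

lemma pad_sum {c m : ℕ} {α : List ℕ} (h : α.length ≤ m) :
    (pad c m α).sum = α.sum + m * c := by
  rw [pad, List.sum_append, sum_map_add, List.sum_replicate, smul_eq_mul]
  have h2 : (m - α.length) * c + α.length * c = m * c := by
    rw [← Nat.add_mul]; congr 1; omega
  have h3 : c * α.length = α.length * c := Nat.mul_comm _ _
  omega

lemma pad_mem_le {c m : ℕ} {α : List ℕ} : ∀ x ∈ pad c m α, c ≤ x := by
  intro x hx
  rcases List.mem_append.mp hx with hx' | hx'
  · rcases List.mem_map.mp hx' with ⟨z, _, rfl⟩; omega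
  · rw [List.eq_of_mem_replicate hx']

/-- partitions of n with all parts ≤ j -/
def PLE (j n : ℕ) : Set (List ℕ) := {l | IsPartitionOf n l ∧ ∀ x ∈ l, x ≤ j}
/-- partitions of n with at most j parts -/
def PLen (j n : ℕ) : Set (List ℕ) := {l | IsPartitionOf n l ∧ l.length ≤ j}

lemma PLE_finite (j n : ℕ) : (PLE j n).Finite :=
  (partFinite n).subset (fun _ hl => hl.1)

lemma PLen_finite (j n : ℕ) : (PLen j n).Finite :=
  (partFinite n).subset (fun _ hl => hl.1)

lemma mem_le_of_part {n : ℕ} {l : List ℕ} (h : IsPartitionOf n l) : ∀ x ∈ l, x ≤ n :=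
  fun _ hx => h.2.2 ▸ List.le_sum_of_mem hx

lemma PLE_lt (j n : ℕ) (h : n < j + 1) : PLE (j+1) n = PLE j n := by
  ext l
  constructor
  · rintro ⟨hp, _⟩
    exact ⟨hp, fun x hx => by have := mem_le_of_part hp x hx; omega⟩
  · rintro ⟨hp, hb⟩
    exact ⟨hp, fun x hx => by have := hb x hx; omega⟩

lemma PLE_rec (j n : ℕ) (h : j + 1 ≤ n) :
    (PLE (j+1) n).ncard = (PLE j n).ncard + (PLE (j+1) (n - (j+1))).ncard := by
  have hsplit : PLE (j+1) n = PLE j n ∪ (List.cons (j+1)) '' PLE (j+1) (n - (j+1)) := by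
    ext l
    constructor
    · rintro ⟨hp, hb⟩
      by_cases hmem : (j+1) ∈ l
      · right
        obtain ⟨a, t, rfl⟩ : ∃ a t, l = a :: t := by
          cases l with
          | nil => simp at hmem
          | cons a t => exact ⟨a, t, rfl⟩
        have ha : a = j + 1 := by
          have h1 := hb a (by simp)
          rcases List.mem_cons.mp hmem with heq | hmem'
          · omega
          · have := (List.pairwise_cons.mp hp.1).1 _ hmem'
            omega
        subst ha
        refine ⟨t, ⟨⟨(List.pairwise_cons.mp hp.1).2, fun x hx => hp.2.1 x (by simp [hx]),
          ?_⟩, fun x hx => hb x (by simp [hx])⟩, rfl⟩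
        have := hp.2.2
        simp only [List.sum_cons] at this
        omega
      · left
        exact ⟨hp, fun x hx => by
          have h1 := hb x hx
          rcases Nat.lt_or_ge x (j+1) with h2 | h2
          · omega
          · exact absurd (by omega : x = j + 1) (fun he => hmem (he ▸ hx))⟩
    · rintro (⟨hp, hb⟩ | ⟨t, ⟨⟨hs, hpos, hsum⟩, hb⟩, rfl⟩)
      · exact ⟨hp, fun x hx => by have := hb x hx; omega⟩
      · refine ⟨⟨List.pairwise_cons.mpr ⟨fun b hb' => hb b hb', hs⟩,
          fun x hx => ?_, ?_⟩, fun x hx => ?_⟩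
        · rcases List.mem_cons.mp hx with rfl | hx'
          · omega
          · exact hpos x hx'
        · simp only [List.sum_cons, hsum]; omega
        · rcases List.mem_cons.mp hx with rfl | hx'
          · omega
          · exact hb x hx'
  rw [hsplit, Set.ncard_union_eq ?_ (PLE_finite j n)
    (((PLE_finite (j+1) (n - (j+1)))).image _),
    Set.ncard_image_of_injOn (fun a _ b _ hab => by simpa using hab)]
  · rw [Set.disjoint_left]
    rintro l ⟨_, hb⟩ ⟨t, _, rfl⟩
    have := hb (j+1) (by simp)
    omega

lemma PLen_lt (j n : ℕ) (h : n < j + 1) : PLen (j+1) n = PLen j n := by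
  ext l
  constructor
  · rintro ⟨hp, _⟩
    refine ⟨hp, ?_⟩
    have := length_le_sum l hp.2.1
    have := hp.2.2
    omega
  · rintro ⟨hp, hb⟩
    exact ⟨hp, by omega⟩

lemma PLen_rec (j n : ℕ) (h : j + 1 ≤ n) :
    (PLen (j+1) n).ncard = (PLen j n).ncard + (PLen (j+1) (n - (j+1))).ncard := by
  have hsplit : PLen (j+1) n = PLen j n ∪ (pad 1 (j+1)) '' PLen (j+1) (n - (j+1)) := by
    ext l
    constructor
    · rintro ⟨hp, hb⟩
      by_cases hlen : l.length ≤ j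
      · exact Or.inl ⟨hp, hlen⟩
      · right
        have hlen' : l.length = j + 1 := by omega
        have hb1 : ∀ x ∈ l, 1 ≤ x := fun x hx => hp.2.1 x hx
        refine ⟨strip 1 l, ⟨⟨strip_sorted hp.1, strip_pos, ?_⟩, ?_⟩, ?_⟩
        · rw [strip_sum hb1, hp.2.2, one_mul, hlen']
        · calc (strip 1 l).length ≤ l.length := strip_length_le 1 l
          _ ≤ j + 1 := by omega
        · rw [← hlen', pad_strip one_pos hp.1 hb1]
    · rintro (⟨hp, hb⟩ | ⟨α, ⟨⟨hs, hpos, hsum⟩, hlen⟩, rfl⟩)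
      · exact ⟨hp, by omega⟩
      · refine ⟨⟨pad_sorted hs, fun x hx => pad_mem_le x hx, ?_⟩, ?_⟩
        · rw [pad_sum hlen, hsum, mul_one]; omega
        · rw [pad_length hlen]
  rw [hsplit, Set.ncard_union_eq ?_ (PLen_finite j n)
    (((PLen_finite (j+1) (n - (j+1)))).image _),
    Set.ncard_image_of_injOn ?_]
  · intro a ha b hb hab
    have h1 := strip_pad (c := 1) (m := j+1) ha.1.2.1
    have h2 := strip_pad (c := 1) (m := j+1) hb.1.2.1
    rw [← h1, ← h2, hab]
  · rw [Set.disjoint_left]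
    rintro l ⟨_, hb⟩ ⟨α, ⟨_, hlen⟩, rfl⟩
    rw [pad_length hlen] at hb
    omega
noncomputable def GA (j : ℕ) : PowerSeries ℤ := PowerSeries.mk fun n => ((PLE j n).ncard : ℤ)
noncomputable def GB (j : ℕ) : PowerSeries ℤ := PowerSeries.mk fun n => ((PLen j n).ncard : ℤ)

lemma part_zero : {l : List ℕ | IsPartitionOf 0 l} = {[]} := by
  ext l
  simp only [Set.mem_setOf_eq, Set.mem_singleton_iff]
  constructor
  · rintro ⟨_, hpos, hsum⟩
    cases l with
    | nil => rfl
    | cons a t =>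
      have := hpos a (by simp)
      simp only [List.sum_cons] at hsum
      omega
  · rintro rfl
    exact ⟨List.Pairwise.nil, by simp, rfl⟩

lemma PLE_zero (j : ℕ) : PLE j 0 = {[]} := by
  apply subset_antisymm
  · intro l hl
    have : l ∈ {l : List ℕ | IsPartitionOf 0 l} := hl.1
    rwa [part_zero] at this
  · rintro l rfl
    exact ⟨⟨List.Pairwise.nil, by simp, rfl⟩, by simp⟩

lemma PLen_zero (j : ℕ) : PLen j 0 = {[]} := by
  apply subset_antisymm
  · intro l hl
    have : l ∈ {l : List ℕ | IsPartitionOf 0 l} := hl.1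
    rwa [part_zero] at this
  · rintro l rfl
    exact ⟨⟨List.Pairwise.nil, by simp, rfl⟩, by simp⟩

lemma PLE_zero' (n : ℕ) (h : 0 < n) : PLE 0 n = ∅ := by
  ext l
  simp only [Set.mem_empty_iff_false, iff_false]
  rintro ⟨⟨_, hpos, hsum⟩, hb⟩
  cases l with
  | nil => simp at hsum; omega
  | cons a t =>
    have := hpos a (by simp)
    have := hb a (by simp)
    omega

lemma PLen_zero' (n : ℕ) (h : 0 < n) : PLen 0 n = ∅ := by
  ext l
  simp only [Set.mem_empty_iff_false, iff_false]
  rintro ⟨⟨_, hpos, hsum⟩, hb⟩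
  cases l with
  | nil => simp at hsum; omega
  | cons a t => simp at hb

lemma GA_zero : GA 0 = 1 := by
  ext n
  rw [GA, PowerSeries.coeff_mk, PowerSeries.coeff_one]
  rcases Nat.eq_zero_or_pos n with rfl | h
  · simp [PLE_zero]
  · rw [PLE_zero' n h]
    simp [Nat.pos_iff_ne_zero.mp h]

lemma GB_zero : GB 0 = 1 := by
  ext n
  rw [GB, PowerSeries.coeff_mk, PowerSeries.coeff_one]
  rcases Nat.eq_zero_or_pos n with rfl | h
  · simp [PLen_zero]
  · rw [PLen_zero' n h]
    simp [Nat.pos_iff_ne_zero.mp h]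

lemma GA_step (j : ℕ) : (1 - PowerSeries.X ^ (j+1)) * GA (j+1) = GA j := by
  ext n
  rw [sub_mul, one_mul, map_sub, PowerSeries.coeff_X_pow_mul']
  simp only [GA, PowerSeries.coeff_mk]
  split_ifs with h
  · rw [PLE_rec j n h]
    push_cast
    ring
  · rw [PLE_lt j n (by omega)]
    ring

lemma GB_step (j : ℕ) : (1 - PowerSeries.X ^ (j+1)) * GB (j+1) = GB j := by
  ext n
  rw [sub_mul, one_mul, map_sub, PowerSeries.coeff_X_pow_mul']
  simp only [GB, PowerSeries.coeff_mk]
  split_ifs with h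
  · rw [PLen_rec j n h]
    push_cast
    ring
  · rw [PLen_lt j n (by omega)]
    ring

lemma qPoch_mul_GA (j : ℕ) : qPoch j * GA j = 1 := by
  induction j with
  | zero => rw [GA_zero, qPoch]; simp
  | succ j ih =>
    have : qPoch (j+1) = qPoch j * (1 - PowerSeries.X ^ (j+1)) := by
      rw [qPoch, qPoch, Finset.prod_range_succ]
    rw [this, mul_assoc, GA_step, ih]

lemma qPoch_mul_GB (j : ℕ) : qPoch j * GB j = 1 := by
  induction j with
  | zero => rw [GB_zero, qPoch]; simp
  | succ j ih =>
    have : qPoch (j+1) = qPoch j * (1 - PowerSeries.X ^ (j+1)) := by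
      rw [qPoch, qPoch, Finset.prod_range_succ]
    rw [this, mul_assoc, GB_step, ih]

lemma qPoch_const (j : ℕ) : PowerSeries.constantCoeff (qPoch j) = 1 := by
  rw [qPoch, map_prod]
  apply Finset.prod_eq_one
  intro m _
  rw [map_sub, map_one, map_pow, PowerSeries.constantCoeff_X]
  simp

lemma invOfUnit_eq {p s : PowerSeries ℤ} (hc : PowerSeries.constantCoeff p = 1)
    (h : p * s = 1) : p.invOfUnit 1 = s := by
  have h2 : p * p.invOfUnit 1 = 1 := PowerSeries.mul_invOfUnit p 1 (by rw [hc]; rfl)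
  calc p.invOfUnit 1 = (p * s) * p.invOfUnit 1 := by rw [h, one_mul]
  _ = s * (p * p.invOfUnit 1) := by ring
  _ = s := by rw [h2, mul_one]

lemma invA (j : ℕ) : (qPoch j).invOfUnit 1 = GA j :=
  invOfUnit_eq (qPoch_const j) (qPoch_mul_GA j)

lemma invB (j : ℕ) : (qPoch j).invOfUnit 1 = GB j :=
  invOfUnit_eq (qPoch_const j) (qPoch_mul_GB j)

lemma getD_mem {l : List ℕ} {j : ℕ} (h : j < l.length) : l.getD j 0 ∈ l := by
  rw [List.getD_eq_getElem l 0 h]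
  exact List.getElem_mem h

lemma mem_iff_getD {l : List ℕ} {x : ℕ} : x ∈ l ↔ ∃ j, ∃ _ : j < l.length, l.getD j 0 = x := by
  constructor
  · intro hx
    rcases List.mem_iff_getElem.mp hx with ⟨j, hj, rfl⟩
    exact ⟨j, hj, List.getD_eq_getElem l 0 hj⟩
  · rintro ⟨j, hj, rfl⟩
    exact getD_mem hj

lemma getD_mono {l : List ℕ} (h : l.Pairwise (· ≥ ·)) {a b : ℕ} (hab : a ≤ b) :
    l.getD b 0 ≤ l.getD a 0 := by
  rcases Nat.lt_or_ge b l.length with hb | hb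
  · have ha : a < l.length := by omega
    rw [List.getD_eq_getElem l 0 hb, List.getD_eq_getElem l 0 ha]
    rcases Nat.eq_or_lt_of_le hab with rfl | hab'
    · exact le_refl _
    · exact List.pairwise_iff_get.mp h ⟨a, ha⟩ ⟨b, hb⟩ hab'
  · rw [List.getD_eq_default l 0 hb]
    exact Nat.zero_le _

lemma getD_take {l : List ℕ} {i j : ℕ} (h : j < i) : (l.take i).getD j 0 = l.getD j 0 := by
  rcases Nat.lt_or_ge j l.length with hj | hj
  · have hj' : j < (l.take i).length := by simp; omega
    rw [List.getD_eq_getElem _ 0 hj', List.getD_eq_getElem l 0 hj, List.getElem_take]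
  · rw [List.getD_eq_default l 0 hj, List.getD_eq_default _ 0 (by simp; omega)]

lemma getD_drop {l : List ℕ} (i j : ℕ) : (l.drop i).getD j 0 = l.getD (i + j) 0 := by
  rcases Nat.lt_or_ge (i + j) l.length with hj | hj
  · have hj' : j < (l.drop i).length := by simp; omega
    rw [List.getD_eq_getElem _ 0 hj', List.getD_eq_getElem l 0 hj, List.getElem_drop]
  · rw [List.getD_eq_default l 0 hj, List.getD_eq_default _ 0 (by simp; omega)]

def Sset (k i n : ℕ) : Set (List ℕ) :=
  {l | IsPartitionOf n l ∧ (∀ j < i, i + k + 1 ≤ l.getD j 0) ∧ ∀ j, i ≤ j → l.getD j 0 ≤ i + k}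

lemma Sset_finite (k i n : ℕ) : (Sset k i n).Finite :=
  (partFinite n).subset (fun _ hl => hl.1)

lemma Sset_le_length {k i n : ℕ} {l : List ℕ} (hl : l ∈ Sset k i n) : i ≤ l.length := by
  rcases Nat.eq_zero_or_pos i with rfl | hi
  · exact Nat.zero_le _
  · by_contra hlen
    have h1 := hl.2.1 (i-1) (by omega)
    have h2 : l.length ≤ i - 1 := by omega
    rw [List.getD_eq_default l 0 h2] at h1
    omega

lemma take_mem_ge {k i n : ℕ} {l : List ℕ} (hl : l ∈ Sset k i n) :
    ∀ x ∈ l.take i, i + k + 1 ≤ x := by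
  intro x hx
  rcases mem_iff_getD.mp hx with ⟨j, hj, rfl⟩
  have hj' : j < i := by
    rw [List.length_take] at hj
    omega
  rw [getD_take hj']
  exact hl.2.1 j hj'

lemma drop_mem_le {k i n : ℕ} {l : List ℕ} (hl : l ∈ Sset k i n) :
    ∀ x ∈ l.drop i, x ≤ i + k := by
  intro x hx
  rcases mem_iff_getD.mp hx with ⟨j, hj, rfl⟩
  rw [getD_drop]
  exact hl.2.2 (i + j) (by omega)

lemma take_length_eq {i : ℕ} {l : List ℕ} (h : i ≤ l.length) : (l.take i).length = i := by
  simp [h]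

lemma sum_take_drop (i : ℕ) (l : List ℕ) : (l.take i).sum + (l.drop i).sum = l.sum := by
  rw [← List.sum_append, List.take_append_drop]

lemma Sset_r_le {k i n : ℕ} {l : List ℕ} (hl : l ∈ Sset k i n) : i * (i + k + 1) ≤ n := by
  have h1 := Sset_le_length hl
  have h2 : (i+k+1) * (l.take i).length ≤ (l.take i).sum := mul_length_le_sum (take_mem_ge hl)
  rw [take_length_eq h1] at h2
  have h3 := sum_take_drop i l
  have h4 := hl.1.2.2
  have h5 : (i+k+1) * i = i * (i+k+1) := Nat.mul_comm _ _
  omega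

lemma Sset_noFix {k i n : ℕ} {l : List ℕ} (hl : l ∈ Sset k i n) :
    ¬ HasKFixedPoint (k : ℤ) l := by
  rintro ⟨⟨j, hj⟩, heq⟩
  have hget : l.get ⟨j, hj⟩ = l.getD j 0 := (List.getD_eq_getElem l 0 hj).symm
  rw [hget] at heq
  have heqn : l.getD j 0 = j + 1 + k := by exact_mod_cast heq
  rcases Nat.lt_or_ge j i with hji | hji
  · have := hl.2.1 j hji
    omega
  · have := hl.2.2 j hji
    omega

lemma Sset_disjoint {k n : ℕ} {i i' : ℕ} (hne : i ≠ i') :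
    Disjoint (Sset k i n) (Sset k i' n) := by
  wlog hlt : i < i' generalizing i i'
  · exact (this hne.symm (by omega)).symm
  rw [Set.disjoint_left]
  rintro l hl hl'
  have h1 := hl.2.2 i (le_refl i)
  have h2 := hl'.2.1 i hlt
  omega

lemma noFix_mem_Sset {k n : ℕ} {l : List ℕ} (hp : IsPartitionOf n l)
    (hnf : ¬ HasKFixedPoint (k : ℤ) l) :
    ∃ i ≤ n, l ∈ Sset k i n := by
  set Q := {j : ℕ | l.getD j 0 ≤ j + k} with hQ
  have hQne : l.length ∈ Q := by
    simp only [hQ, Set.mem_setOf_eq]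
    rw [List.getD_eq_default l 0 (le_refl _)]
    omega
  set i := sInf Q with hi
  have hiQ : i ∈ Q := Nat.sInf_mem ⟨_, hQne⟩
  have hilen : i ≤ l.length := Nat.sInf_le hQne
  have hnofix : ∀ j, j < l.length → l.getD j 0 ≠ j + 1 + k := by
    intro j hj habs
    apply hnf
    refine ⟨⟨j, hj⟩, ?_⟩
    have : l.get ⟨j, hj⟩ = l.getD j 0 := (List.getD_eq_getElem l 0 hj).symm
    rw [this, habs]
    push_cast
    ring
  refine ⟨i, le_trans hilen (hp.2.2 ▸ length_le_sum l hp.2.1), hp, ?_, ?_⟩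
  · intro j hji
    have hii : 0 < i := by omega
    have hnotQ : i - 1 ∉ Q := Nat.notMem_of_lt_sInf (by omega)
    have h1 : (i-1) + k + 1 ≤ l.getD (i-1) 0 := by
      simp only [hQ, Set.mem_setOf_eq] at hnotQ
      omega
    have hlen1 : i - 1 < l.length := by
      by_contra habs
      rw [List.getD_eq_default l 0 (by omega)] at h1
      omega
    have h2 := hnofix (i-1) hlen1
    have h3 : i + k + 1 ≤ l.getD (i-1) 0 := by omega
    calc i + k + 1 ≤ l.getD (i-1) 0 := h3
    _ ≤ l.getD j 0 := getD_mono hp.1 (by omega)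
  · intro j hji
    calc l.getD j 0 ≤ l.getD i 0 := getD_mono hp.1 hji
    _ ≤ i + k := hiQ

lemma gk_eq_sum (k n : ℕ) : gk (k : ℤ) n = ∑ i ∈ Finset.range (n+1), (Sset k i n).ncard := by
  rw [gk]
  have hcover : {l : List ℕ | IsPartitionOf n l ∧ ¬ HasKFixedPoint (k:ℤ) l}
      = ⋃ i ∈ Finset.range (n+1), Sset k i n := by
    ext l
    simp only [Set.mem_setOf_eq, Set.mem_iUnion, Finset.mem_range]
    constructor
    · rintro ⟨hp, hnf⟩
      rcases noFix_mem_Sset hp hnf with ⟨i, hin, hmem⟩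
      exact ⟨i, by omega, hmem⟩
    · rintro ⟨i, _, hmem⟩
      exact ⟨hmem.1, Sset_noFix hmem⟩
  rw [hcover]
  exact ncard_biUnion _ _ (fun i _ => Sset_finite k i n)
    (fun i _ j _ hij => Sset_disjoint hij)

/-- the assembling map -/
def asm (c i : ℕ) (q : List ℕ × List ℕ) : List ℕ := pad c i q.2 ++ q.1

lemma asm_mem {k i n : ℕ} {p : ℕ × ℕ} (hp : p.1 + p.2 = n - i * (i+k+1))
    (hr : i * (i+k+1) ≤ n)
    {q : List ℕ × List ℕ} (hq : q ∈ (PLE (i+k) p.1) ×ˢ (PLen i p.2)) :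
    asm (i+k+1) i q ∈ Sset k i n ∧ (asm (i+k+1) i q).drop i = q.1 := by
  obtain ⟨⟨⟨hβs, hβp, hβsum⟩, hβb⟩, ⟨⟨hαs, hαp, hαsum⟩, hαlen⟩⟩ := hq
  set c := i + k + 1 with hc
  have hpadlen : (pad c i q.2).length = i := pad_length hαlen
  have hdrop : (asm c i q).drop i = q.1 := by
    rw [asm, List.drop_left' hpadlen]
  have hmemc : ∀ x ∈ pad c i q.2, c ≤ x := pad_mem_le
  refine ⟨⟨⟨?_, ?_, ?_⟩, ?_, ?_⟩, hdrop⟩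
  · -- sorted
    rw [asm, List.pairwise_append]
    refine ⟨pad_sorted hαs, hβs, ?_⟩
    intro x hx y hy
    have h1 := hmemc x hx
    have h2 := hβb y hy
    omega
  · -- positive
    intro x hx
    rcases List.mem_append.mp hx with hx' | hx'
    · have := hmemc x hx'; omega
    · exact hβp x hx'
  · -- sum
    rw [asm, List.sum_append, pad_sum hαlen, hαsum, hβsum]
    omega
  · -- first condition
    intro j hj
    rw [asm, List.getD_append _ _ _ _ (by omega : j < (pad c i q.2).length)]
    exact hmemc _ (getD_mem (by omega))
  · -- second condition
    intro j hji
    rcases Nat.lt_or_ge j (asm c i q).length with hj | hj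
    · rw [asm, List.getD_append_right _ _ _ _ (by omega : (pad c i q.2).length ≤ j)]
      rcases Nat.lt_or_ge (j - (pad c i q.2).length) q.1.length with h2 | h2
      · exact hβb _ (getD_mem h2)
      · rw [List.getD_eq_default _ 0 h2]; omega
    · rw [List.getD_eq_default _ 0 hj]; omega

lemma Sset_decomp {k i n : ℕ} {l : List ℕ} (hl : l ∈ Sset k i n) :
    l = asm (i+k+1) i (l.drop i, strip (i+k+1) (l.take i)) ∧
    (l.drop i) ∈ PLE (i+k) ((l.drop i).sum) ∧
    (strip (i+k+1) (l.take i)) ∈ PLen i ((l.take i).sum - i * (i+k+1)) := by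
  set c := i + k + 1 with hc
  have hilen : i ≤ l.length := Sset_le_length hl
  have htlen : (l.take i).length = i := take_length_eq hilen
  have htmem := take_mem_ge hl
  have hts : (l.take i).Pairwise (· ≥ ·) := hl.1.1.sublist (List.take_sublist i l)
  have hds : (l.drop i).Pairwise (· ≥ ·) := hl.1.1.sublist (List.drop_sublist i l)
  refine ⟨?_, ⟨⟨hds, ?_, rfl⟩, drop_mem_le hl⟩, ⟨⟨strip_sorted hts, strip_pos, ?_⟩, ?_⟩⟩
  · -- l = asm ...
    rw [asm]
    have := pad_strip (by omega : 0 < c) hts htmem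
    rw [htlen] at this
    rw [this, List.take_append_drop]
  · -- drop positive
    exact fun x hx => hl.1.2.1 x (List.mem_of_mem_drop hx)
  · -- strip sum
    rw [strip_sum htmem, htlen, Nat.mul_comm c i]
  · -- strip length
    calc (strip c (l.take i)).length ≤ (l.take i).length := strip_length_le _ _
    _ ≤ i := by omega

lemma Sset_card (k i n : ℕ) (hr : i * (i+k+1) ≤ n) :
    (Sset k i n).ncard = ∑ p ∈ Finset.HasAntidiagonal.antidiagonal (n - i * (i+k+1)),
      (PLE (i+k) p.1).ncard * (PLen i p.2).ncard := by
  set c := i + k + 1 with hc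
  set r := i * c with hrr
  have hcover : Sset k i n = ⋃ p ∈ Finset.HasAntidiagonal.antidiagonal (n - r),
      asm c i '' ((PLE (i+k) p.1) ×ˢ (PLen i p.2)) := by
    ext l
    simp only [Set.mem_iUnion, Finset.HasAntidiagonal.mem_antidiagonal]
    constructor
    · intro hl
      obtain ⟨heq, hβ, hα⟩ := Sset_decomp hl
      have h1 : r ≤ (l.take i).sum := by
        have h2 : c * (l.take i).length ≤ (l.take i).sum := mul_length_le_sum (take_mem_ge hl)
        rw [take_length_eq (Sset_le_length hl)] at h2
        have : c * i = i * c := Nat.mul_comm _ _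
        omega
      have h3 := sum_take_drop i l
      have h4 := hl.1.2.2
      refine ⟨((l.drop i).sum, (l.take i).sum - r), by omega, ?_⟩
      exact ⟨(l.drop i, strip c (l.take i)), ⟨hβ, hα⟩, heq.symm⟩
    · rintro ⟨p, hpsum, q, hq, rfl⟩
      exact (asm_mem hpsum hr hq).1
  rw [hcover]
  rw [ncard_biUnion]
  · apply Finset.sum_congr rfl
    intro p hp
    have hinj : Set.InjOn (asm c i) ((PLE (i+k) p.1) ×ˢ (PLen i p.2)) := by
      rintro q ⟨_, ⟨⟨_, hαp, _⟩, hαlen⟩⟩ q' ⟨_, ⟨⟨_, hαp', _⟩, hαlen'⟩⟩ heq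
      rw [asm, asm] at heq
      have hlen : (pad c i q.2).length = (pad c i q'.2).length := by
        rw [pad_length hαlen, pad_length hαlen']
      obtain ⟨hpadeq, hβeq⟩ := List.append_inj heq hlen
      have hαeq : q.2 = q'.2 := by
        rw [← strip_pad (c := c) (m := i) hαp, ← strip_pad (c := c) (m := i) hαp', hpadeq]
      exact Prod.ext hβeq hαeq
    rw [Set.ncard_image_of_injOn hinj, ncard_prod' _ _ (PLE_finite _ _) (PLen_finite _ _)]
  · intro p _
    exact (((PLE_finite (i+k) p.1).prod (PLen_finite i p.2)).image _)
  · intro p hp p' hp' hne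
    rw [Set.disjoint_left]
    rintro l ⟨q, hq, rfl⟩ ⟨q', hq', heq'⟩
    apply hne
    have h1 : (asm c i q).drop i = q.1 :=
      (asm_mem (Finset.HasAntidiagonal.mem_antidiagonal.mp hp) hr hq).2
    have h2 : (asm c i q').drop i = q'.1 := by
      have := (asm_mem (Finset.HasAntidiagonal.mem_antidiagonal.mp hp') hr hq').2
      exact this
    have hq1 : q.1.sum = p.1 := hq.1.1.2.2
    have hq1' : q'.1.sum = p'.1 := hq'.1.1.2.2
    have hfst : p.1 = p'.1 := by
      rw [← hq1, ← hq1', ← h1, ← h2, heq']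
    have hp1 := Finset.HasAntidiagonal.mem_antidiagonal.mp hp
    have hp2 := Finset.HasAntidiagonal.mem_antidiagonal.mp hp'
    have : p.2 = p'.2 := by omega
    exact Prod.ext hfst this

lemma Sset_empty (k i n : ℕ) (h : n < i * (i+k+1)) : Sset k i n = ∅ := by
  ext l
  simp only [Set.mem_empty_iff_false, iff_false]
  intro hl
  exact absurd (Sset_r_le hl) (by omega)

theorem stmt13 (k : ℕ) (n : ℕ) :
    (gk (k : ℤ) n : ℤ) = ∑ i ∈ Finset.range (n + 1), (PowerSeries.coeff n)
      ((PowerSeries.X : PowerSeries ℤ) ^ (i * i + i * k + i) *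
        (qPoch (i + k)).invOfUnit 1 * (qPoch i).invOfUnit 1) := by
  have hcoeff : ∀ i : ℕ, ((Sset k i n).ncard : ℤ) = (PowerSeries.coeff n)
      ((PowerSeries.X : PowerSeries ℤ) ^ (i * i + i * k + i) *
        (qPoch (i + k)).invOfUnit 1 * (qPoch i).invOfUnit 1) := by
    intro i
    rw [invA (i+k), invB i, mul_assoc,
      show i * i + i * k + i = i * (i+k+1) by ring,
      PowerSeries.coeff_X_pow_mul']
    split_ifs with h
    · rw [PowerSeries.coeff_mul, Sset_card k i n h]
      push_cast
      apply Finset.sum_congr rfl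
      intro p _
      rw [GA, GB, PowerSeries.coeff_mk, PowerSeries.coeff_mk]
    · rw [Sset_empty k i n (by omega)]
      simp
  rw [gk_eq_sum k n]
  push_cast
  exact Finset.sum_congr rfl fun i _ => hcoeff i
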